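/- arXiv:2107.08071 — 2 statements merged into one kernel-verified Lean document; each statement's English description precedes it below -/
import Mathlib

section
/- Type II moves preserve connectivity in permutation graphs: if a permutation τ of {1,…,n} is obtained from a permutation σ of {1,…,n} by a Type II move, then any two vertices that are joined by a path in G_σ are joined by a path in G_τ. In particular, a Type II move cannot disconnect a connected component of the permutation graph. -/
/-- The permutation graph of `σ`: vertices `i < j` are adjacent iff `σ i > σ j`. -/
def permGraph {n : ℕ} (σ : Equiv.Perm (Fin n)) : SimpleGraph (Fin n) :=
  SimpleGraph.fromRel (fun i j => i < j ∧ σ j < σ i)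

/-- `τ` is obtained from `σ` by a Type II move at positions `p < q`:
`σ p < σ q`, every value strictly between `σ p` and `σ q` occurs at a position
smaller than `q`, and `τ` is `σ` with the values at positions `p` and `q` swapped. -/
def PermTypeIIAt {n : ℕ} (σ τ : Equiv.Perm (Fin n)) (p q : Fin n) : Prop :=
  p < q ∧ σ p < σ q ∧ (∀ v : Fin n, σ p < v → v < σ q → σ.symm v < q) ∧
    τ = σ * Equiv.swap p q

/-- `τ` is obtained from `σ` by a Type II move. -/
def PermTypeII {n : ℕ} (σ τ : Equiv.Perm (Fin n)) : Prop :=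
  ∃ p q : Fin n, PermTypeIIAt σ τ p q

/-- `σ` is Type-I-below `τ`: there is a strictly increasing choice of positions
`f` with `τ (f j) ≥ σ j` for all `j`, and `σ` order isomorphic to the subword of
`τ` on those positions. -/
def TypeIBelow {n m : ℕ} (σ : Equiv.Perm (Fin n)) (τ : Equiv.Perm (Fin m)) : Prop :=
  ∃ f : Fin n → Fin m, StrictMono f ∧ (∀ j, (σ j : ℕ) ≤ (τ (f j) : ℕ)) ∧
    ∀ j k, σ j < σ k ↔ τ (f j) < τ (f k)

/-- One step of the order `≤ᵢ` on permutations of arbitrary sizes: either a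
Type-I-below relation or (for equal sizes) a Type II move. -/
def PermStep : (Σ n : ℕ, Equiv.Perm (Fin n)) → (Σ n : ℕ, Equiv.Perm (Fin n)) → Prop :=
  fun x y => TypeIBelow x.2 y.2 ∨
    ∃ h : x.1 = y.1, PermTypeII (Equiv.permCongr (finCongr h) x.2) y.2

/-- The order `≤ᵢ` on permutations of arbitrary sizes: the reflexive–transitive
closure of the union of the Type-I-below relation and the Type II move relation. -/
def PermLeI : (Σ n : ℕ, Equiv.Perm (Fin n)) → (Σ n : ℕ, Equiv.Perm (Fin n)) → Prop :=
  Relation.ReflTransGen PermStep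

lemma permGraph_adj' {n : ℕ} (σ : Equiv.Perm (Fin n)) {i j : Fin n}
    (hij : i < j) (hσ : σ j < σ i) : (permGraph σ).Adj i j := by
  rw [permGraph, SimpleGraph.fromRel_adj]
  exact ⟨hij.ne, Or.inl ⟨hij, hσ⟩⟩

/-- Type II moves preserve connectivity in permutation graphs:
if `τ` is obtained from `σ` by a Type II move, then any two vertices joined by
a path in `G_σ` are joined by a path in `G_τ`. -/
theorem typeII_preserves_reachability {n : ℕ} (σ τ : Equiv.Perm (Fin n))
    (h : PermTypeII σ τ) :
    ∀ u v : Fin n, (permGraph σ).Reachable u v → (permGraph τ).Reachable u v := by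
  obtain ⟨p, q, hpq, hab, hbet, hτ⟩ := h
  have hτp : τ p = σ q := by rw [hτ]; simp
  have hτq : τ q = σ p := by rw [hτ]; simp
  have hτo : ∀ x : Fin n, x ≠ p → x ≠ q → τ x = σ x := by
    intro x h1 h2
    rw [hτ]
    simp [Equiv.swap_apply_of_ne_of_ne h1 h2]
  have hpq' : (permGraph τ).Adj p q :=
    permGraph_adj' τ hpq (by rw [hτp, hτq]; exact hab)
  have key : ∀ i j : Fin n, i < j → σ j < σ i → (permGraph τ).Reachable i j := by
    intro i j hij hji
    by_cases hjp : j = p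
    · subst hjp
      have hiq : i ≠ q := ne_of_lt (hij.trans hpq)
      by_cases hb : σ q < σ i
      · exact (permGraph_adj' τ hij
          (by rw [hτp, hτo i (ne_of_lt hij) hiq]; exact hb)).reachable
      · have hlt : σ i < σ q :=
          lt_of_le_of_ne (not_lt.mp hb) (fun h => hiq (σ.injective h))
        have e1 : (permGraph τ).Adj i q := permGraph_adj' τ (hij.trans hpq)
          (by rw [hτq, hτo i (ne_of_lt hij) hiq]; exact hji)
        exact e1.reachable.trans hpq'.reachable.symm
    · by_cases hjq : j = q
      · subst hjq
        have hip : i ≠ p := by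
          rintro rfl; exact absurd hab (not_lt.mpr hji.le)
        exact (permGraph_adj' τ hij
          (by rw [hτo i hip (ne_of_lt hij), hτq]; exact lt_trans hab hji)).reachable
      · by_cases hipc : i = p
        · subst hipc
          exact (permGraph_adj' τ hij
            (by rw [hτp, hτo j hjp hjq]; exact lt_trans hji hab)).reachable
        · by_cases hiqc : i = q
          · subst hiqc
            have hja : σ j < σ p := by
              rcases lt_trichotomy (σ j) (σ p) with h1 | h1 | h1
              · exact h1
              · exact absurd (σ.injective h1) hjp
              · have := hbet (σ j) h1 hji
                simp only [Equiv.symm_apply_apply] at this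
                exact absurd this (not_lt.mpr hij.le)
            exact (permGraph_adj' τ hij
              (by rw [hτq, hτo j hjp hjq]; exact hja)).reachable
          · exact (permGraph_adj' τ hij
              (by rw [hτo i hipc hiqc, hτo j hjp hjq]; exact hji)).reachable
  intro u v huv
  obtain ⟨w⟩ := huv
  induction w with
  | nil => exact SimpleGraph.Reachable.refl _
  | cons ha _ ih =>
    rename_i a b c _
    rw [permGraph, SimpleGraph.fromRel_adj] at ha
    obtain ⟨-, h1 | h1⟩ := ha
    · exact (key a b h1.1 h1.2).trans ih
    · exact ((key b a h1.1 h1.2).symm).trans ih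
end

section
/- If a permutation τ of {1,…,n} is obtained from a permutation σ of {1,…,n} by a Type II move at positions p < q, and the vertices p and q lie in the same connected component of the permutation graph G_σ (i.e., p and q are joined by a path in G_σ), then the permutation graph G_τ contains a cycle (G_τ is not acyclic). -/
section helpers

variable {n : ℕ} {σ τ : Equiv.Perm (Fin n)} {p q : Fin n}

lemma permGraph_adj {ρ : Equiv.Perm (Fin n)} {a b : Fin n} :
    (permGraph ρ).Adj a b ↔ a ≠ b ∧ ((a < b ∧ ρ b < ρ a) ∨ (b < a ∧ ρ a < ρ b)) := by
  simp [permGraph, SimpleGraph.fromRel_adj]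

lemma tau_p (h : PermTypeIIAt σ τ p q) : τ p = σ q := by
  obtain ⟨_, _, _, rfl⟩ := h
  simp [Equiv.Perm.mul_apply]

lemma tau_q (h : PermTypeIIAt σ τ p q) : τ q = σ p := by
  obtain ⟨_, _, _, rfl⟩ := h
  simp [Equiv.Perm.mul_apply]

lemma tau_other (h : PermTypeIIAt σ τ p q) {x : Fin n} (hx : x ≠ p) (hx' : x ≠ q) :
    τ x = σ x := by
  obtain ⟨_, _, _, rfl⟩ := h
  simp [Equiv.Perm.mul_apply, Equiv.swap_apply_of_ne_of_ne hx hx']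

/-- L1 : p and q are adjacent in G_τ. -/
lemma adj_pq (h : PermTypeIIAt σ τ p q) : (permGraph τ).Adj p q := by
  obtain ⟨hpq, hσ, -, -⟩ := id h
  rw [permGraph_adj]
  exact ⟨hpq.ne, Or.inl ⟨hpq, by rw [tau_p h, tau_q h]; exact hσ⟩⟩

/-- L2 : edges of G_σ avoiding p are edges of G_τ. -/
lemma adj_preserve (h : PermTypeIIAt σ τ p q) {a b : Fin n} (ha : a ≠ p) (hb : b ≠ p)
    (hab : (permGraph σ).Adj a b) : (permGraph τ).Adj a b := by
  obtain ⟨hpq, hσ, hbet, -⟩ := id h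
  rw [permGraph_adj] at hab ⊢
  refine ⟨hab.1, ?_⟩
  have key : ∀ x y : Fin n, x ≠ p → y ≠ p → x < y → σ y < σ x → τ y < τ x := by
    intro x y hx hy hxy hv
    rcases eq_or_ne y q with rfl | hyq
    · rw [tau_q h, tau_other h hx hxy.ne]
      exact lt_trans hσ hv
    · rw [tau_other h hy hyq]
      rcases eq_or_ne x q with rfl | hxq
      · rw [tau_q h]
        rcases lt_trichotomy (σ y) (σ p) with h1 | h1 | h1
        · exact h1
        · exact absurd (σ.injective h1) hy
        · have := hbet (σ y) h1 hv
          simp at this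
          exact absurd hxy (not_lt.2 this.le)
      · rw [tau_other h hx hxq]
        exact hv
  rcases hab.2 with ⟨h1, h2⟩ | ⟨h1, h2⟩
  · exact Or.inl ⟨h1, key a b ha hb h1 h2⟩
  · exact Or.inr ⟨h1, key b a hb ha h1 h2⟩

/-- L3 : if the edge p–v of G_σ is lost in G_τ, then v–q is an edge of G_τ,
and moreover v < p and σ p < σ v. -/
lemma adj_lost (h : PermTypeIIAt σ τ p q) {v : Fin n} (hv : (permGraph σ).Adj p v)
    (hlost : ¬ (permGraph τ).Adj p v) : v < p ∧ σ p < σ v ∧ (permGraph τ).Adj v q := by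
  obtain ⟨hpq, hσ, hbet, -⟩ := id h
  rw [permGraph_adj] at hv
  rcases hv.2 with ⟨h1, h2⟩ | ⟨h1, h2⟩
  · -- p < v, σ v < σ p : always preserved, contradiction
    exfalso
    apply hlost
    rw [permGraph_adj]
    have hvq : v ≠ q := fun hvq => absurd (hvq ▸ h2) (not_lt.2 hσ.le)
    refine ⟨hv.1, Or.inl ⟨h1, ?_⟩⟩
    rw [tau_p h, tau_other h (Ne.symm hv.1) hvq]
    exact lt_trans h2 hσ
  · -- v < p, σ p < σ v
    have hvq : v < q := lt_trans h1 hpq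
    refine ⟨h1, h2, ?_⟩
    rw [permGraph_adj]
    refine ⟨hvq.ne, Or.inl ⟨hvq, ?_⟩⟩
    rw [tau_q h, tau_other h (Ne.symm hv.1) hvq.ne]
    exact h2

/-- L4 : a lost edge p–v together with an edge v–q in G_σ is impossible. -/
lemma no_short (h : PermTypeIIAt σ τ p q) {v : Fin n} (hv : (permGraph σ).Adj p v)
    (hlost : ¬ (permGraph τ).Adj p v) (hvq : (permGraph σ).Adj v q) : False := by
  obtain ⟨h1, h2, -⟩ := adj_lost h hv hlost
  obtain ⟨hpq, hσ, hbet, -⟩ := id h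
  rw [permGraph_adj] at hvq
  have hvltq : v < q := lt_trans h1 hpq
  have h3 : σ q < σ v := by
    rcases hvq.2 with ⟨-, h3⟩ | ⟨h3, -⟩
    · exact h3
    · exact absurd hvltq (not_lt.2 h3.le)
  apply hlost
  rw [permGraph_adj]
  refine ⟨(h1.ne).symm, Or.inr ⟨h1, ?_⟩⟩
  rw [tau_p h, tau_other h h1.ne hvltq.ne]
  exact h3

/-- Transfer a path in G_σ avoiding p to a walk in G_τ with the same support. -/
lemma transfer (h : PermTypeIIAt σ τ p q) {a b : Fin n} (W : (permGraph σ).Walk a b)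
    (hp : p ∉ W.support) :
    ∃ W2 : (permGraph τ).Walk a b, W2.support = W.support := by
  induction W with
  | nil => exact ⟨SimpleGraph.Walk.nil, rfl⟩
  | cons hadj W' ih =>
    rw [SimpleGraph.Walk.support_cons, List.mem_cons] at hp
    push_neg at hp
    obtain ⟨hp1, hp2⟩ := hp
    obtain ⟨W2, hW2⟩ := ih hp2
    have hb : _ ≠ p := fun hb => hp2 (hb ▸ SimpleGraph.Walk.start_mem_support W')
    exact ⟨SimpleGraph.Walk.cons (adj_preserve h (Ne.symm hp1) hb hadj) W2,
      by simp [SimpleGraph.Walk.support_cons, hW2]⟩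

end helpers

/-- If `τ` is obtained from `σ` by a Type II move at positions
`p < q`, and `p` and `q` lie in the same connected component of `G_σ` (are
joined by a path in `G_σ`), then `G_τ` contains a cycle (is not acyclic). -/
theorem typeII_on_connected_creates_cycle {n : ℕ} (σ τ : Equiv.Perm (Fin n))
    (p q : Fin n) (h : PermTypeIIAt σ τ p q)
    (hr : (permGraph σ).Reachable p q) :
    ¬ (permGraph τ).IsAcyclic := by
  intro hac
  obtain ⟨hpq, hσ, hbet, -⟩ := id h
  have hnadj : ¬ (permGraph σ).Adj p q := by
    rw [permGraph_adj]
    rintro ⟨-, ⟨-, h2⟩ | ⟨h2, -⟩⟩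
    · exact absurd hσ (not_lt.2 h2.le)
    · exact absurd hpq (not_lt.2 h2.le)
  obtain ⟨W0⟩ := hr
  obtain ⟨W, hW⟩ := W0.toPath
  cases W with
  | nil => exact hpq.ne rfl
  | @cons _ v1 _ hadj W' =>
    rw [SimpleGraph.Walk.cons_isPath_iff] at hW
    obtain ⟨hW', hpW'⟩ := hW
    have hv1q : v1 ≠ q := by
      rintro rfl
      exact hnadj hadj
    obtain ⟨W2, hsupp⟩ := transfer h W' hpW'
    have hW2path : W2.IsPath := by
      rw [SimpleGraph.Walk.isPath_def, hsupp]
      exact (SimpleGraph.Walk.isPath_def _).1 hW'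
    have hlen : W2.length = W'.length := by
      have := congrArg List.length hsupp
      rwa [SimpleGraph.Walk.length_support, SimpleGraph.Walk.length_support,
        Nat.add_right_cancel_iff] at this
    have hlenpos : 1 ≤ W'.length := by
      rcases Nat.eq_zero_or_pos W'.length with h0 | h0
      · exact absurd (SimpleGraph.Walk.eq_of_length_eq_zero h0) hv1q
      · exact h0
    by_cases hcase : (permGraph τ).Adj p v1
    · -- preserved case: two paths p → q
      have hpW2 : p ∉ W2.support := by rw [hsupp]; exact hpW'
      have heq := hac.path_unique ⟨SimpleGraph.Walk.cons hcase W2, hW2path.cons hpW2⟩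
        (SimpleGraph.Path.singleton (adj_pq h))
      have h2 := congrArg (fun P : (permGraph τ).Path p q => P.1.length) heq
      simp only [SimpleGraph.Path.singleton, SimpleGraph.Walk.length_cons,
        SimpleGraph.Walk.length_nil] at h2
      rw [hlen] at h2
      omega
    · -- lost case: two paths v1 → q
      obtain ⟨-, -, hA⟩ := adj_lost h hadj hcase
      have heq := hac.path_unique ⟨W2, hW2path⟩ (SimpleGraph.Path.singleton hA)
      have hl1 : W2.length = 1 := by
        have := congrArg (fun P : (permGraph τ).Path v1 q => P.1.length) heq
        simpa [SimpleGraph.Path.singleton] using this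
      rw [hlen] at hl1
      exact no_short h hadj hcase (SimpleGraph.Walk.adj_of_length_eq_one hl1)
end
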